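/- Let λ_n → 1 with λ_n - 1 = O(n^{-1/3}). Let P_n and Q_n be homogeneous Erdős–Rényi graph distributions on n vertices with edge probabilities 1/n and λ_n/n respectively. Then there exists A > 0 such that the Hellinger affinity satisfies α(P_n, Q_n) = A·exp(-n(λ_n-1)^2/16) + o(1) as n → ∞. In particular, log α(P_n, Q_n) = -n(λ_n-1)^2/16 + O(n(λ_n-1)^3) + O(1). -/

import Mathlib

open Filter Asymptotics Real

lemma sq_ge_aux {x b : ℝ} (h0 : 0 ≤ x) (hb : 0 ≤ b) (h : b^2 ≤ x^2) : b ≤ x := by nlinarith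

lemma sq_le_aux {x b : ℝ} (h0 : 0 ≤ x) (hb : 0 ≤ b) (h : x^2 ≤ b^2) : x ≤ b := by nlinarith

lemma log_one_sub_bound {u : ℝ} (h1 : u ≤ 1/2) :
    |Real.log (1-u) + u| ≤ 2*u^2 := by
  have hpos : (0:ℝ) < 1 - u := by linarith
  have hup : Real.log (1-u) ≤ -u := by
    have := Real.log_le_sub_one_of_pos hpos
    linarith
  have hlow : -u - 2*u^2 ≤ Real.log (1-u) := by
    have hinv : Real.log (1-u) = - Real.log (1-u)⁻¹ := by
      rw [Real.log_inv]; ring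
    have h2 : Real.log (1-u)⁻¹ ≤ (1-u)⁻¹ - 1 := Real.log_le_sub_one_of_pos (by positivity)
    have h3 : (1-u)⁻¹ - 1 = u / (1-u) := by field_simp; ring
    have h4 : u / (1-u) ≤ u + 2*u^2 := by
      rw [div_le_iff₀ hpos]
      nlinarith
    rw [hinv]
    linarith
  rw [abs_le]; constructor <;> nlinarith

lemma abs_exp_sub_one' (y : ℝ) : |Real.exp y - 1| ≤ |y| * Real.exp |y| := by
  have hinv : Real.exp (-y) * Real.exp y = 1 := by rw [← Real.exp_add]; simp
  rcases le_or_gt 0 y with h | h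
  · rw [abs_of_nonneg h, abs_of_nonneg (by nlinarith [Real.add_one_le_exp y] : (0:ℝ) ≤ Real.exp y - 1)]
    nlinarith [mul_le_mul_of_nonneg_right (Real.add_one_le_exp (-y)) (Real.exp_pos y).le]
  · rw [abs_of_neg h, abs_of_nonpos (by nlinarith [Real.exp_lt_exp.mpr h, Real.exp_zero] : Real.exp y - 1 ≤ 0)]
    nlinarith [Real.add_one_le_exp y,
      mul_le_mul_of_nonneg_left (Real.one_le_exp (by linarith : (0:ℝ) ≤ -y)) (by linarith : (0:ℝ) ≤ -y)]

lemma cast_half_mul (n : ℕ) (hn : 1 ≤ n) :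
    ((n*(n-1)/2 : ℕ):ℝ) = (n:ℝ)*((n:ℝ)-1)/2 := by
  have hd : 2 ∣ n * (n-1) := by
    rcases Nat.even_or_odd n with h | h
    · exact Dvd.dvd.mul_right h.two_dvd _
    · exact Dvd.dvd.mul_left (Nat.Odd.sub_odd h odd_one).two_dvd _
  rw [Nat.cast_div hd (by norm_num), Nat.cast_mul, Nat.cast_sub hn]
  norm_num

set_option maxHeartbeats 2000000 in
lemma arith_est (nR ε s D u : ℝ) (hn : 4 ≤ nR) (hl : |ε| ≤ 1/2)
    (hs2 : s^2 = 1+ε) (hs0 : 0 ≤ s) (hD : 1 ≤ D)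
    (hu : u = (s-1)^2/(2*nR) + ε^2/(2*nR^2*D)) :
    0 ≤ u ∧ u ≤ 1/16 ∧
      |(nR*(nR-1)/2)*Real.log (1-u) + nR*ε^2/16| ≤ nR*|ε|^3 + ε^2 := by
  obtain ⟨hl1', hl2'⟩ := abs_le.mp hl
  have hD0 : (0:ℝ) < D := by linarith
  have hn0 : (0:ℝ) < nR := by linarith
  have hε2 : ε^2 ≤ 1/4 := by nlinarith
  have hsl : 1/2 ≤ s := sq_ge_aux hs0 (by norm_num) (by rw [hs2]; nlinarith)
  have hsu : s ≤ 3/2 := sq_le_aux hs0 (by norm_num) (by rw [hs2]; nlinarith)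
  have hsm : (s-1)^2*(s+1)^2 = ε^2 := by linear_combination (s^2 - 1 + ε) * hs2
  have hsq : (s-1)^2 ≤ ε^2/2 := by
    have h2 : 2 ≤ (s+1)^2 := by nlinarith
    nlinarith [mul_le_mul_of_nonneg_left h2 (sq_nonneg (s-1))]
  have habs : |s-1| ≤ |ε| := by
    have h1 : (s-1)^2 ≤ ε^2 := by nlinarith [sq_nonneg (s-1)]
    rw [← Real.sqrt_sq_eq_abs, ← Real.sqrt_sq_eq_abs]
    exact Real.sqrt_le_sqrt h1
  have hu0 : 0 ≤ u := by rw [hu]; positivity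
  have t1 : (s-1)^2/(2*nR) ≤ ε^2/(2*nR) :=
    div_le_div_of_nonneg_right (by linarith [sq_nonneg ε]) (by positivity)
  have t2 : ε^2/(2*nR^2*D) ≤ ε^2/(2*nR^2) :=
    div_le_div_of_nonneg_left (sq_nonneg ε) (by positivity)
      (le_mul_of_one_le_right (by positivity) hD)
  have t3 : ε^2/(2*nR^2) ≤ ε^2/(2*nR) := by
    refine div_le_div_of_nonneg_left (sq_nonneg ε) (by positivity) ?_
    nlinarith
  have huε : u ≤ ε^2/nR := by
    have e1 : ε^2/(2*nR) + ε^2/(2*nR) = ε^2/nR := by field_simp; ring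
    rw [hu]; linarith
  have hεn : ε^2/nR ≤ 1/16 := by
    rw [div_le_iff₀ hn0]; nlinarith
  have hu16 : u ≤ 1/16 := le_trans huε hεn
  refine ⟨hu0, hu16, ?_⟩
  set K := nR*(nR-1)/2 with hK
  have hK0 : 0 ≤ K := by
    rw [hK]
    exact div_nonneg (mul_nonneg (by linarith) (by linarith)) (by norm_num)
  have hKn : K ≤ nR^2/2 := by
    rw [hK]
    have h := mul_le_mul_of_nonneg_left (by linarith : nR-1 ≤ nR) (by linarith : (0:ℝ) ≤ nR)
    have h2 : nR^2 = nR*nR := pow_two nR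
    linarith only [h, h2]
  set θ := Real.log (1-u) + u with hθ
  have hθb : |θ| ≤ 2*u^2 := log_one_sub_bound (by linarith only [hu16])
  have hKθ : |K*θ| ≤ ε^2/4 := by
    rw [abs_mul, abs_of_nonneg hK0]
    have huu : u*u ≤ (ε^2/nR)*(ε^2/nR) := mul_le_mul huε huε hu0 (by positivity)
    have hq : (ε^2/nR)*(ε^2/nR) = ε^4/nR^2 := by field_simp
    have h1 : K * |θ| ≤ K * (2*u^2) := mul_le_mul_of_nonneg_left hθb hK0
    have h2 : K * (2*u^2) ≤ ε^2/4 := by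
      have h5 : u^2 ≤ ε^4/nR^2 := by rw [← hq]; nlinarith only [huu]
      have h6 : K * (2*u^2) ≤ (nR^2/2) * (2*(ε^4/nR^2)) := by
        apply mul_le_mul hKn (by linarith) (by positivity) (by positivity)
      have h7 : (nR^2/2) * (2*(ε^4/nR^2)) = ε^4 := by field_simp
      nlinarith only [h6, h7, mul_le_mul_of_nonneg_left hε2 (sq_nonneg ε), sq_nonneg ε]
    linarith only [h1, h2]
  set T := nR*ε^2/16 - K*u with hT
  have hdecomp : K*Real.log (1-u) + nR*ε^2/16 = T + K*θ := by
    rw [hT, hθ]; ring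
  set F := nR*(s-1)^3*(s+3)/16 with hF
  set G := (s-1)^2/4 with hG
  set H := (nR-1)*ε^2/(4*nR*D) with hH
  have hnne : nR ≠ 0 := ne_of_gt hn0
  have hDne : D ≠ 0 := ne_of_gt hD0
  have hTFGH : T = F + G - H := by
    rw [hT, hF, hG, hH, hK, hu, show ε = s^2 - 1 by linarith only [hs2]]
    field_simp
    ring
  have hFb : |F| ≤ nR*|ε|^3 := by
    rw [hF, abs_div, abs_mul, abs_mul, abs_pow,
      abs_of_nonneg (by positivity : (0:ℝ) ≤ nR),
      abs_of_nonneg (by linarith : (0:ℝ) ≤ s+3),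
      abs_of_nonneg (by norm_num : (0:ℝ) ≤ (16:ℝ))]
    rw [div_le_iff₀ (by norm_num)]
    have h3 : |s-1|^3 ≤ |ε|^3 := pow_le_pow_left₀ (abs_nonneg _) habs 3
    have h4 : nR*|s-1|^3 ≤ nR*|ε|^3 := mul_le_mul_of_nonneg_left h3 (by positivity)
    have h5 : nR*|s-1|^3*(s+3) ≤ nR*|ε|^3*(s+3) :=
      mul_le_mul_of_nonneg_right h4 (by linarith only [hsl])
    have h6 : nR*|ε|^3*(s+3) ≤ nR*|ε|^3*16 :=
      mul_le_mul_of_nonneg_left (by linarith only [hsu]) (by positivity)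
    linarith only [h5, h6]
  have hGb : |G| ≤ ε^2/8 := by
    rw [hG, abs_of_nonneg (by positivity)]; linarith only [hsq]
  have hHb : |H| ≤ ε^2/4 := by
    rw [hH, abs_of_nonneg (div_nonneg (mul_nonneg (by linarith only [hn]) (sq_nonneg ε)) (by positivity))]
    rw [div_le_div_iff₀ (by positivity) (by norm_num)]
    nlinarith only [sq_nonneg ε, hn,
      mul_le_mul_of_nonneg_left hD (by positivity : (0:ℝ) ≤ 4*nR*ε^2)]
  have hTb : |T| ≤ |F| + |G| + |H| := by
    rw [hTFGH]
    calc |F + G - H| ≤ |F + G| + |H| := abs_sub _ _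
      _ ≤ |F| + |G| + |H| := by linarith only [abs_add_le F G]
  rw [hdecomp]
  calc |T + K*θ| ≤ |T| + |K*θ| := abs_add_le _ _
    _ ≤ nR*|ε|^3 + ε^2 := by linarith only [hTb, hFb, hGb, hHb, hKθ, sq_nonneg ε]

lemma diff_bound (x e E1 : ℝ) (hx : 0 ≤ x) (he : 0 ≤ e) (he32 : e ≤ 1/32)
    (hE : |E1| ≤ x*e + e^2) :
    |Real.exp (-x/16 + E1) - Real.exp (-x/16)| ≤ Real.exp 1 * (32*e + e^2) := by
  have h1 : Real.exp (-x/16 + E1) - Real.exp (-x/16)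
      = Real.exp (-x/16) * (Real.exp E1 - 1) := by rw [Real.exp_add]; ring
  rw [h1, abs_mul, abs_of_pos (Real.exp_pos _)]
  have h2 : |Real.exp E1 - 1| ≤ |E1| * Real.exp |E1| := abs_exp_sub_one' E1
  have hE2 : |E1| ≤ x/32 + 1 := by nlinarith [abs_nonneg E1]
  have h3 : Real.exp |E1| ≤ Real.exp (x/32+1) := Real.exp_le_exp.mpr hE2
  have h4 : |E1| * Real.exp |E1| ≤ (x*e+e^2) * Real.exp (x/32+1) :=
    mul_le_mul hE h3 (Real.exp_pos _).le (by positivity)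
  have hxe : x * Real.exp (-x/32) ≤ 32 := by
    have k1 := Real.add_one_le_exp (x/32)
    have k2 : Real.exp (-x/32) * Real.exp (x/32) = 1 := by
      rw [← Real.exp_add, show -x/32 + x/32 = 0 by ring, Real.exp_zero]
    nlinarith [Real.exp_pos (-x/32), Real.exp_pos (x/32),
      mul_le_mul_of_nonneg_left k1 (Real.exp_pos (-x/32)).le]
  have hle1 : Real.exp (-x/32) ≤ 1 := Real.exp_le_one_iff.mpr (by linarith)
  calc Real.exp (-x/16) * |Real.exp E1 - 1|
      ≤ Real.exp (-x/16) * ((x*e+e^2) * Real.exp (x/32+1)) :=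
        mul_le_mul_of_nonneg_left (le_trans h2 h4) (Real.exp_pos _).le
    _ = (x*e+e^2) * Real.exp (-x/32) * Real.exp 1 := by
        have h5 : Real.exp (-x/16) * Real.exp (x/32+1) = Real.exp (-x/32) * Real.exp 1 := by
          rw [← Real.exp_add, ← Real.exp_add]; congr 1; ring
        calc Real.exp (-x/16) * ((x*e+e^2) * Real.exp (x/32+1))
            = (x*e+e^2) * (Real.exp (-x/16) * Real.exp (x/32+1)) := by ring
          _ = (x*e+e^2) * (Real.exp (-x/32) * Real.exp 1) := by rw [h5]
          _ = (x*e+e^2) * Real.exp (-x/32) * Real.exp 1 := by ring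
    _ ≤ Real.exp 1 * (32*e + e^2) := by
        have k1 : x*Real.exp (-x/32)*e ≤ 32*e := mul_le_mul_of_nonneg_right hxe he
        have k2 : e^2*Real.exp (-x/32) ≤ e^2 := by nlinarith [sq_nonneg e, Real.exp_pos (-x/32)]
        have k3 : (x*e+e^2)*Real.exp (-x/32) ≤ 32*e + e^2 := by nlinarith
        calc (x*e+e^2)*Real.exp (-x/32)*Real.exp 1
            = Real.exp 1 * ((x*e+e^2)*Real.exp (-x/32)) := by ring
          _ ≤ Real.exp 1 * (32*e+e^2) := mul_le_mul_of_nonneg_left k3 (Real.exp_pos 1).le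

set_option maxHeartbeats 1000000 in
lemma key_est (n : ℕ) (hn : 4 ≤ n) (lam : ℝ) (hl : |lam - 1| ≤ 1/2) :
    1/2 ≤ Real.sqrt lam / n + Real.sqrt ((1 - 1/n) * (1 - lam/n)) ∧
    |Real.log ((Real.sqrt lam / n + Real.sqrt ((1 - 1/n) * (1 - lam/n))) ^ (n*(n-1)/2))
       + (n:ℝ)*(lam - 1)^2/16| ≤ (n:ℝ)*|lam - 1|^3 + (lam-1)^2 := by
  have hnR : (4:ℝ) ≤ (n:ℝ) := by exact_mod_cast hn
  have hn0 : (0:ℝ) < (n:ℝ) := by linarith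
  obtain ⟨hl1', hl2'⟩ := abs_le.mp hl
  have hl1 : 1/2 ≤ lam := by linarith
  have hl2 : lam ≤ 3/2 := by linarith
  set s := Real.sqrt lam with hs
  have hs2 : s^2 = lam := Real.sq_sqrt (by linarith)
  have hs0 : 0 ≤ s := Real.sqrt_nonneg _
  set p := 1/(n:ℝ) with hp
  set q := lam/(n:ℝ) with hq
  have hpv : p ≤ 1/4 := by
    rw [hp, div_le_div_iff₀ hn0 (by norm_num)]; linarith
  have hqv : q ≤ 3/8 := by
    rw [hq, div_le_div_iff₀ hn0 (by norm_num)]; linarith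
  have hp0 : 0 ≤ p := by rw [hp]; positivity
  have hq0 : 0 ≤ q := by rw [hq]; positivity
  set a := Real.sqrt (1-p) with ha
  set c := Real.sqrt (1-q) with hc
  have ha2 : a^2 = 1-p := Real.sq_sqrt (by linarith only [hpv])
  have hc2 : c^2 = 1-q := Real.sq_sqrt (by linarith only [hqv])
  have ha0 : 0 ≤ a := Real.sqrt_nonneg _
  have hc0 : 0 ≤ c := Real.sqrt_nonneg _
  have hal : 1/2 ≤ a := sq_ge_aux ha0 (by norm_num) (by rw [ha2]; nlinarith only [hpv])
  have hcl : 1/2 ≤ c := sq_ge_aux hc0 (by norm_num) (by rw [hc2]; nlinarith only [hqv])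
  have hD1 : 1 ≤ (a+c)^2 := by nlinarith only [hal, hcl, ha0, hc0]
  have hac0 : (0:ℝ) < a + c := by linarith only [hal, hcl]
  have hid : a*c = 1 - (p+q)/2 - (q-p)^2/(2*(a+c)^2) := by
    have h2 : ((a+c):ℝ) ≠ 0 := ne_of_gt hac0
    field_simp
    rw [show p = 1 - a^2 by linarith only [ha2], show q = 1 - c^2 by linarith only [hc2]]
    ring
  have bsqrt : Real.sqrt ((1-p)*(1-q)) = a*c := by
    rw [Real.sqrt_mul (by linarith only [hpv] : (0:ℝ) ≤ 1-p), ← ha, ← hc]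
  set u := (s-1)^2/(2*(n:ℝ)) + (lam-1)^2/(2*(n:ℝ)^2*(a+c)^2) with hu
  have hbu : s/(n:ℝ) + Real.sqrt ((1-p)*(1-q)) = 1 - u := by
    rw [bsqrt, hid, hu, hp, hq, ← hs2]
    have hne : (n:ℝ) ≠ 0 := ne_of_gt hn0
    have hacne : a + c ≠ 0 := ne_of_gt hac0
    field_simp
    ring
  obtain ⟨hu0, hu16, hest⟩ := arith_est (n:ℝ) (lam-1) s ((a+c)^2) u hnR hl
    (by rw [hs2]; ring) hs0 hD1 hu
  constructor
  · rw [hbu]; linarith only [hu16]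
  · rw [Real.log_pow, cast_half_mul n (by omega), hbu]
    exact hest

theorem ER_critical_affinity_asymptotics (lam : ℕ → ℝ)
    (hpos : ∀ n, 0 < lam n)
    (hlim : Tendsto lam atTop (nhds 1))
    (hO : (fun n => lam n - 1) =O[atTop] fun n => ((n : ℝ)) ^ (-(1/3 : ℝ))) :
    (∃ A > (0:ℝ), Tendsto (fun n =>
        (Real.sqrt (lam n) / n
          + Real.sqrt ((1 - 1 / n) * (1 - lam n / n))) ^ (n * (n - 1) / 2)
        - A * Real.exp (-(n * (lam n - 1) ^ 2) / 16)) atTop (nhds 0)) ∧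
    ∃ E : ℕ → ℝ, (E =O[atTop] fun n => (n : ℝ) * |lam n - 1| ^ 3 + 1) ∧
      ∀ᶠ n in atTop,
        Real.log ((Real.sqrt (lam n) / n
            + Real.sqrt ((1 - 1 / n) * (1 - lam n / n))) ^ (n * (n - 1) / 2))
          = -(n * (lam n - 1) ^ 2) / 16 + E n := by
  have hε0 : Tendsto (fun n => lam n - 1) atTop (nhds 0) := by
    have h := hlim.sub_const 1
    simpa using h
  have habs0 : Tendsto (fun n => |lam n - 1|) atTop (nhds 0) := by
    simpa using hε0.abs
  have hsmall : ∀ᶠ n in atTop, |lam n - 1| ≤ 1/32 :=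
    habs0.eventually (eventually_le_nhds (by norm_num))
  set E : ℕ → ℝ := fun n => Real.log ((Real.sqrt (lam n) / n
      + Real.sqrt ((1 - 1 / n) * (1 - lam n / n))) ^ (n * (n - 1) / 2))
      + (n:ℝ)*(lam n - 1)^2/16 with hE
  have hkey : ∀ᶠ n in atTop,
      (1/2 ≤ Real.sqrt (lam n) / n + Real.sqrt ((1 - 1/n) * (1 - lam n/n))) ∧
      |E n| ≤ (n:ℝ)*|lam n - 1|^3 + (lam n - 1)^2 := by
    filter_upwards [eventually_ge_atTop 4, hsmall] with n h4 h32
    have h := key_est n h4 (lam n) (by linarith only [h32])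
    exact ⟨h.1, by simp only [hE]; exact h.2⟩
  constructor
  · refine ⟨1, one_pos, ?_⟩
    rw [tendsto_zero_iff_abs_tendsto_zero]
    have h2 : Tendsto (fun n => |lam n - 1|^2) atTop (nhds 0) := by
      have := habs0.mul habs0
      simpa [pow_two] using this
    have hgt : Tendsto (fun n => Real.exp 1 * (32*|lam n - 1| + |lam n - 1|^2))
        atTop (nhds 0) := by
      have := ((habs0.const_mul (32:ℝ)).add h2).const_mul (Real.exp 1)
      simpa using this
    apply squeeze_zero' (Eventually.of_forall fun n => abs_nonneg _) ?_ hgt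
    filter_upwards [hkey, hsmall] with n hk h32
    obtain ⟨hb2, hEb⟩ := hk
    have hx0 : 0 ≤ (n:ℝ)*(lam n - 1)^2 := by positivity
    have hbpos : (0:ℝ) < Real.sqrt (lam n) / n
        + Real.sqrt ((1 - 1/n) * (1 - lam n/n)) := by linarith only [hb2]
    have hppos : (0:ℝ) < (Real.sqrt (lam n) / n
        + Real.sqrt ((1 - 1/n) * (1 - lam n/n))) ^ (n * (n-1) / 2) := pow_pos hbpos _
    have hlogform : (Real.sqrt (lam n) / n
        + Real.sqrt ((1 - 1/n) * (1 - lam n/n))) ^ (n * (n-1) / 2)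
        = Real.exp (-((n:ℝ)*(lam n - 1)^2)/16 + E n) := by
      rw [← Real.exp_log hppos]
      congr 1
      simp only [hE]
      ring
    rw [hlogform, one_mul]
    have hEbd : |E n| ≤ ((n:ℝ)*(lam n - 1)^2)*|lam n - 1| + |lam n - 1|^2 := by
      have heq : (n:ℝ)*|lam n - 1|^3 + (lam n - 1)^2
          = ((n:ℝ)*(lam n - 1)^2)*|lam n - 1| + |lam n - 1|^2 := by
        rw [← sq_abs (lam n - 1)]
        ring
      linarith only [hEb, heq.ge, heq.le]
    exact diff_bound ((n:ℝ)*(lam n - 1)^2) |lam n - 1| (E n) hx0 (abs_nonneg _) h32 hEbd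
  · refine ⟨E, ?_, ?_⟩
    · rw [Asymptotics.isBigO_iff]
      refine ⟨1, ?_⟩
      filter_upwards [hkey, hsmall] with n hk h32
      obtain ⟨-, hEb⟩ := hk
      rw [Real.norm_eq_abs, Real.norm_eq_abs, one_mul]
      have h1 : (lam n - 1)^2 ≤ 1 := by
        nlinarith only [h32, sq_abs (lam n - 1), abs_nonneg (lam n - 1)]
      have h2 : (0:ℝ) ≤ (n:ℝ)*|lam n - 1|^3 + 1 := by positivity
      rw [abs_of_nonneg h2]
      linarith only [hEb, h1]
    · filter_upwards with n
      simp only [hE]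
      ring
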